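/- Let E be a finite-dimensional real inner product space and f : E → ℝ differentiable, uniformly convex (m-strongly convex for some m > 0), bounded below, with Lipschitz-continuous gradient ∇f. Let iterates be generated by the PRP conjugate gradient method with exact line search: q^{n+1} = q^n + β^n p^n, g^n = ∇f(q^n), p^0 = -g^0, p^{n+1} = -g^{n+1} + α^{n+1} p^n, α^{n+1} = ⟨g^{n+1}, g^{n+1} - g^n⟩/‖g^n‖², where β^n minimizes β ↦ f(q^n + β p^n) over ℝ (so that ⟨g^{n+1}, p^n⟩ = 0 whenever g^n ≠ 0). Then liminf_{n→∞} ‖g^n‖ = 0. -/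

import Mathlib

open scoped RealInnerProductSpace

/-- Global convergence of the PRP conjugate gradient method with
exact line search for a differentiable, uniformly (strongly) convex, bounded
below objective with Lipschitz continuous gradient:
`liminf_{n→∞} ‖g^n‖ = 0`. -/
theorem prp_liminf_gradient_zero
    {E : Type*} [NormedAddCommGroup E] [InnerProductSpace ℝ E] [FiniteDimensional ℝ E]
    (f : E → ℝ) (hf : Differentiable ℝ f)
    (m : ℝ) (hm : 0 < m)
    (hconv : ∀ x y : E,
      f x + ⟪gradient f x, y - x⟫ + (m / 2) * ‖y - x‖ ^ 2 ≤ f y)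
    (hbdd : BddBelow (Set.range f))
    (M : ℝ) (hM : 0 < M)
    (hLip : ∀ x y : E, ‖gradient f x - gradient f y‖ ≤ M * ‖x - y‖)
    (q p g : ℕ → E) (β α : ℕ → ℝ)
    (hg : ∀ n, g n = gradient f (q n))
    (hq : ∀ n, q (n + 1) = q n + β n • p n)
    (hp0 : p 0 = -g 0)
    (hα : ∀ n, α (n + 1) = ⟪g (n + 1), g (n + 1) - g n⟫ / ‖g n‖ ^ 2)
    (hp : ∀ n, p (n + 1) = -g (n + 1) + α (n + 1) • p n)
    (hls : ∀ n, ∀ b : ℝ, f (q n + β n • p n) ≤ f (q n + b • p n)) :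
    Filter.liminf (fun n => ‖g n‖) Filter.atTop = 0 := by
  obtain ⟨c, hc⟩ := hbdd
  have hcf : ∀ x, c ≤ f x := fun x => hc (Set.mem_range_self x)
  -- derivative along a line
  have hline : ∀ (x v : E) (b : ℝ),
      HasDerivAt (fun t : ℝ => f (x + t • v)) ⟪gradient f (x + b • v), v⟫ b := by
    intro x v b
    have h1 : HasDerivAt (fun t : ℝ => x + t • v) v b := by
      simpa using ((hasDerivAt_id b).smul_const v).const_add x
    have h2 := ((hf (x + b • v)).hasGradientAt.hasFDerivAt).comp_hasDerivAt b h1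
    rw [InnerProductSpace.toDual_apply_apply] at h2
    exact h2
  -- exact line search orthogonality
  have horth : ∀ n, ⟪g (n + 1), p n⟫ = 0 := by
    intro n
    have hmin : IsLocalMin (fun b : ℝ => f (q n + b • p n)) (β n) :=
      Filter.Eventually.of_forall (hls n)
    have h := hmin.hasDerivAt_eq_zero (hline (q n) (p n) (β n))
    rw [hg (n + 1), hq n]
    exact h
  -- case: some gradient vanishes
  by_cases hzero : ∃ N, g N = 0
  · obtain ⟨N, hN⟩ := hzero
    have hstay : ∀ k, g (N + k) = 0 := by
      intro k
      induction k with
      | zero => simpa using hN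
      | succ k ih =>
        have hgrad0 : gradient f (q (N + k)) = 0 := by rw [← hg]; exact ih
        have h1 : f (q (N + k + 1)) ≤ f (q (N + k)) := by
          have := hls (N + k) 0
          rw [← hq (N + k)] at this
          simpa using this
        have h2 := hconv (q (N + k)) (q (N + k + 1))
        rw [hgrad0] at h2
        simp only [inner_zero_left, add_zero] at h2
        have hsq : (m / 2) * ‖q (N + k + 1) - q (N + k)‖ ^ 2 ≤ 0 := by linarith
        have hnn : 0 ≤ (m / 2) * ‖q (N + k + 1) - q (N + k)‖ ^ 2 := by positivity
        have hq0 : ‖q (N + k + 1) - q (N + k)‖ = 0 := by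
          by_contra h
          have hpos : 0 < ‖q (N + k + 1) - q (N + k)‖ :=
            lt_of_le_of_ne (norm_nonneg _) (Ne.symm h)
          have := mul_pos (by linarith : (0:ℝ) < m / 2) (pow_pos hpos 2)
          linarith
        have : q (N + k + 1) = q (N + k) := by
          have := norm_eq_zero.mp hq0
          rwa [sub_eq_zero] at this
        show g (N + (k + 1)) = 0
        have : g (N + k + 1) = g (N + k) := by rw [hg, hg, this]
        rw [show N + (k + 1) = N + k + 1 from rfl, this]
        exact ih
    have hev : ∀ᶠ n in Filter.atTop, ‖g n‖ = (0 : ℝ) := by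
      filter_upwards [Filter.eventually_ge_atTop N] with n hn
      have := hstay (n - N)
      rw [Nat.add_sub_cancel' hn] at this
      simp [this]
    rw [Filter.liminf_congr hev]
    simp
  -- main case: gradients never vanish
  push_neg at hzero
  have hgnorm : ∀ n, 0 < ‖g n‖ := fun n => norm_pos_iff.mpr (hzero n)
  -- ⟪g n, p n⟫ = -‖g n‖²
  have hgp : ∀ n, ⟪g n, p n⟫ = -‖g n‖ ^ 2 := by
    intro n
    induction n with
    | zero =>
      rw [hp0, inner_neg_right, real_inner_self_eq_norm_sq]
    | succ n ih =>
      rw [hp n, inner_add_right, inner_neg_right, inner_smul_right, horth n,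
        real_inner_self_eq_norm_sq]
      ring
  have hpne : ∀ n, p n ≠ 0 := by
    intro n h
    have := hgp n
    rw [h, inner_zero_right] at this
    have := hgnorm n
    nlinarith
  have hpnorm : ∀ n, 0 < ‖p n‖ := fun n => norm_pos_iff.mpr (hpne n)
  -- descent of f along iterates, strong convexity form
  have hB : ∀ n, f (q (n + 1)) + (m / 2) * ‖β n • p n‖ ^ 2 ≤ f (q n) := by
    intro n
    have h := hconv (q (n + 1)) (q n)
    have hsub : q n - q (n + 1) = -(β n • p n) := by rw [hq n]; abel
    rw [hsub] at h
    have hin : ⟪gradient f (q (n + 1)), -(β n • p n)⟫ = 0 := by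
      rw [← hg, inner_neg_right, inner_smul_right, horth n]; ring
    rw [hin] at h
    rw [norm_neg] at h
    linarith
  have hmono : ∀ n, f (q (n + 1)) ≤ f (q n) := by
    intro n
    have := hB n
    nlinarith [sq_nonneg ‖β n • p n‖, hm]
  have hanti : Antitone (fun n => f (q n)) := antitone_nat_of_succ_le hmono
  -- f(q n) converges, so steps tend to zero
  have hbdd' : BddBelow (Set.range fun n => f (q n)) := ⟨c, by rintro x ⟨n, rfl⟩; exact hcf _⟩
  have htend : Filter.Tendsto (fun n => f (q n)) Filter.atTop (nhds (⨅ n, f (q n))) :=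
    tendsto_atTop_ciInf hanti hbdd'
  have htend' : Filter.Tendsto (fun n => f (q (n + 1))) Filter.atTop (nhds (⨅ n, f (q n))) :=
    htend.comp (Filter.tendsto_add_atTop_nat 1)
  have hdiff : Filter.Tendsto (fun n => f (q n) - f (q (n + 1))) Filter.atTop (nhds 0) := by
    simpa using htend.sub htend'
  have hΔsq : Filter.Tendsto (fun n => ‖β n • p n‖ ^ 2) Filter.atTop (nhds 0) := by
    apply squeeze_zero (fun n => by positivity)
      (fun n => ?_) (by simpa using hdiff.const_mul (2 / m))
    have := hB n
    rw [div_mul_eq_mul_div, le_div_iff₀ hm]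
    nlinarith
  have hΔ : Filter.Tendsto (fun n => ‖β n • p n‖) Filter.atTop (nhds 0) := by
    have := hΔsq.sqrt
    simp only [Real.sqrt_zero] at this
    convert this using 2 with n
    rw [Real.sqrt_sq (norm_nonneg _)]
  -- bound on distance of iterates from the start
  have hqb : ∀ n, ‖q n - q 0‖ ≤ 2 * ‖g 0‖ / m := by
    intro n
    have h := hconv (q 0) (q n)
    have hfn : f (q n) ≤ f (q 0) := hanti (Nat.zero_le n)
    rw [← hg 0] at h
    have hCS : ⟪g 0, q n - q 0⟫ ≥ -(‖g 0‖ * ‖q n - q 0‖) := by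
      linarith [abs_real_inner_le_norm (g 0) (q n - q 0),
        neg_abs_le (⟪g 0, q n - q 0⟫)]
    have hd : 0 ≤ ‖q n - q 0‖ := norm_nonneg _
    rcases eq_or_lt_of_le hd with hd0 | hd0
    · rw [← hd0]; positivity
    · rw [le_div_iff₀ hm]
      nlinarith [h, hCS, hd0]
  -- uniform bound on gradients
  obtain ⟨G, hG0, hGb⟩ : ∃ G : ℝ, 0 < G ∧ ∀ n, ‖g n‖ ≤ G := by
    refine ⟨‖g 0‖ + M * (2 * ‖g 0‖ / m), ?_, ?_⟩
    · have h0 := hgnorm 0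
      positivity
    · intro n
      have h1 : ‖g n - g 0‖ ≤ M * ‖q n - q 0‖ := by rw [hg n, hg 0]; exact hLip _ _
      have h2 : ‖g n‖ - ‖g 0‖ ≤ ‖g n - g 0‖ := norm_sub_norm_le _ _
      have h3 : M * ‖q n - q 0‖ ≤ M * (2 * ‖g 0‖ / m) :=
        mul_le_mul_of_nonneg_left (hqb n) hM.le
      linarith
  -- descent lemma (from strong convexity + Lipschitz + exact line search)
  have hA : ∀ n, f (q (n + 1)) ≤ f (q n) - ‖g n‖ ^ 4 / (4 * M * ‖p n‖ ^ 2) := by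
    intro n
    have hpn := hpnorm n
    have hgn := hgnorm n
    obtain ⟨t, htdef, ht⟩ : ∃ t : ℝ, t = ‖g n‖ ^ 2 / (2 * M * ‖p n‖ ^ 2) ∧ 0 < t :=
      ⟨_, rfl, by positivity⟩
    set z : E := q n + t • p n with hzdef
    have h := hconv z (q n)
    have hsub : q n - z = -(t • p n) := by rw [hzdef]; abel
    rw [hsub, inner_neg_right, inner_smul_right] at h
    have hlip2 : ‖gradient f z - gradient f (q n)‖ ≤ M * (t * ‖p n‖) := by
      have h5 := hLip z (q n)
      have hzq : ‖z - q n‖ = t * ‖p n‖ := by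
        rw [hzdef, add_sub_cancel_left, norm_smul, Real.norm_eq_abs, abs_of_pos ht]
      rwa [hzq] at h5
    have hsplit : ⟪gradient f z, p n⟫
        = ⟪g n, p n⟫ + ⟪gradient f z - gradient f (q n), p n⟫ := by
      rw [hg n, inner_sub_left]; ring
    have hCS2 : ⟪gradient f z - gradient f (q n), p n⟫ ≤ M * (t * ‖p n‖) * ‖p n‖ :=
      le_trans (real_inner_le_norm _ _)
        (mul_le_mul_of_nonneg_right hlip2 (norm_nonneg _))
    have hMt : M * (t * ‖p n‖) * ‖p n‖ = ‖g n‖ ^ 2 / 2 := by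
      rw [htdef]; field_simp
    have hinner_le : ⟪gradient f z, p n⟫ ≤ -(‖g n‖ ^ 2) / 2 := by
      rw [hsplit, hgp n]
      rw [hMt] at hCS2
      linarith
    have hfz : f z ≤ f (q n) - t * (‖g n‖ ^ 2 / 2) := by
      have hnn : 0 ≤ (m / 2) * ‖-(t • p n)‖ ^ 2 := by positivity
      nlinarith [h, mul_le_mul_of_nonneg_left hinner_le ht.le]
    have hstep : f (q (n + 1)) ≤ f z := by
      have h6 := hls n t
      rwa [← hq n] at h6
    have hteq : t * (‖g n‖ ^ 2 / 2) = ‖g n‖ ^ 4 / (4 * M * ‖p n‖ ^ 2) := by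
      rw [htdef]; field_simp; ring
    linarith [hteq ▸ hfz]
  -- now the liminf argument
  by_contra hL
  have hboundG : Filter.IsBoundedUnder (· ≤ ·) Filter.atTop (fun n => ‖g n‖) :=
    Filter.isBoundedUnder_of ⟨G, hGb⟩
  have hcob : Filter.IsCoboundedUnder (· ≥ ·) Filter.atTop (fun n => ‖g n‖) :=
    hboundG.isCoboundedUnder_ge
  have hbelow : Filter.IsBoundedUnder (· ≥ ·) Filter.atTop (fun n => ‖g n‖) :=
    Filter.isBoundedUnder_of ⟨0, fun n => norm_nonneg _⟩
  have h0le : (0 : ℝ) ≤ Filter.liminf (fun n => ‖g n‖) Filter.atTop :=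
    Filter.le_liminf_of_le hcob (Filter.Eventually.of_forall fun n => norm_nonneg _)
  have hLpos : 0 < Filter.liminf (fun n => ‖g n‖) Filter.atTop :=
    lt_of_le_of_ne h0le (Ne.symm hL)
  obtain ⟨ε, hε, heps⟩ : ∃ ε : ℝ, 0 < ε ∧ ∀ᶠ n in Filter.atTop, ε < ‖g n‖ := by
    refine ⟨Filter.liminf (fun n => ‖g n‖) Filter.atTop / 2, by linarith, ?_⟩
    exact Filter.eventually_lt_of_lt_liminf (by linarith) hbelow
  -- eventually small steps
  have hsmall : ∀ᶠ n in Filter.atTop, ‖β n • p n‖ < ε ^ 2 / (2 * G * M) := by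
    have hpos : 0 < ε ^ 2 / (2 * G * M) :=
      div_pos (pow_pos hε 2) (mul_pos (mul_pos two_pos hG0) hM)
    exact hΔ.eventually (eventually_lt_nhds hpos)
  obtain ⟨N, hN⟩ := (heps.and hsmall).exists_forall_of_atTop
  have hεle : ∀ n ≥ N, ε ≤ ‖g n‖ := fun n hn => ((hN n hn).1).le
  have hstep_small : ∀ n ≥ N, ‖β n • p n‖ ≤ ε ^ 2 / (2 * G * M) :=
    fun n hn => ((hN n hn).2).le
  -- bound on α
  have hαb : ∀ n ≥ N, |α (n + 1)| ≤ 1 / 2 := by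
    intro n hn
    have hgn := hgnorm n
    have hGne : G ≠ 0 := ne_of_gt hG0
    have hMne : M ≠ 0 := ne_of_gt hM
    have hnum : |⟪g (n + 1), g (n + 1) - g n⟫| ≤ G * (M * ‖β n • p n‖) := by
      calc |⟪g (n + 1), g (n + 1) - g n⟫| ≤ ‖g (n + 1)‖ * ‖g (n + 1) - g n‖ :=
            abs_real_inner_le_norm _ _
        _ ≤ G * (M * ‖β n • p n‖) := by
            apply mul_le_mul (hGb _) ?_ (norm_nonneg _) hG0.le
            have h7 := hLip (q (n + 1)) (q n)
            rwa [← hg, ← hg, hq n, add_sub_cancel_left] at h7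
    have hden : ε ^ 2 ≤ ‖g n‖ ^ 2 := by
      have := hεle n hn
      nlinarith
    rw [hα n, abs_div]
    rw [abs_of_nonneg (by positivity : (0:ℝ) ≤ ‖g n‖ ^ 2)]
    rw [div_le_iff₀ (by positivity)]
    have h1 : G * (M * ‖β n • p n‖) ≤ G * (M * (ε ^ 2 / (2 * G * M))) := by
      apply mul_le_mul_of_nonneg_left _ hG0.le
      exact mul_le_mul_of_nonneg_left (hstep_small n hn) hM.le
    have h2 : G * (M * (ε ^ 2 / (2 * G * M))) = ε ^ 2 / 2 := by
      field_simp
    have h3 : |⟪g (n + 1), g (n + 1) - g n⟫| ≤ ε ^ 2 / 2 :=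
      le_of_le_of_eq (hnum.trans h1) h2
    linarith [h3, hden]
  -- bound on p
  obtain ⟨P, hP0, hP2G, hPN⟩ : ∃ P : ℝ, 0 < P ∧ 2 * G ≤ P ∧ ‖p N‖ ≤ P :=
    ⟨max ‖p N‖ (2 * G), lt_of_lt_of_le (mul_pos two_pos hG0) (le_max_right _ _),
      le_max_right _ _, le_max_left _ _⟩
  have hPb : ∀ n ≥ N, ‖p n‖ ≤ P := by
    intro n hn
    induction n, hn using Nat.le_induction with
    | base => exact hPN
    | succ n hn ih =>
      have h1 : ‖p (n + 1)‖ ≤ ‖g (n + 1)‖ + |α (n + 1)| * ‖p n‖ := by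
        rw [hp n]
        calc ‖-g (n + 1) + α (n + 1) • p n‖ ≤ ‖-g (n + 1)‖ + ‖α (n + 1) • p n‖ :=
              norm_add_le _ _
          _ = ‖g (n + 1)‖ + |α (n + 1)| * ‖p n‖ := by
              rw [norm_neg, norm_smul, Real.norm_eq_abs]
      have h2 : |α (n + 1)| * ‖p n‖ ≤ (1 / 2) * P :=
        mul_le_mul (hαb n hn) ih (norm_nonneg _) (by norm_num)
      have := hGb (n + 1)
      linarith
  -- uniform descent δ
  obtain ⟨δ, hδ0, hδprop⟩ : ∃ δ : ℝ, 0 < δ ∧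
      ∀ n ≥ N, δ ≤ ‖g n‖ ^ 4 / (4 * M * ‖p n‖ ^ 2) := by
    refine ⟨ε ^ 4 / (4 * M * P ^ 2),
      div_pos (pow_pos hε 4) (mul_pos (by linarith) (pow_pos hP0 2)), ?_⟩
    intro n hn
    have hple : ‖p n‖ ^ 2 ≤ P ^ 2 := pow_le_pow_left₀ (norm_nonneg _) (hPb n hn) 2
    have hgge : ε ^ 4 ≤ ‖g n‖ ^ 4 := pow_le_pow_left₀ hε.le (hεle n hn) 4
    exact div_le_div₀ (by positivity) hgge
      (mul_pos (by linarith) (pow_pos (hpnorm n) 2))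
      (by nlinarith [hM.le])
  have hdesc : ∀ n ≥ N, f (q (n + 1)) ≤ f (q n) - δ := by
    intro n hn
    linarith [hA n, hδprop n hn]
  -- telescoping the descent contradicts boundedness from below
  have hsum : ∀ k : ℕ, f (q (N + k)) ≤ f (q N) - k * δ := by
    intro k
    induction k with
    | zero => simp
    | succ k ih =>
      have hstep := hdesc (N + k) (Nat.le_add_right N k)
      have heq : (N + (k + 1)) = (N + k) + 1 := by ring
      rw [heq]
      push_cast
      linarith
  obtain ⟨k, hk⟩ := exists_nat_gt ((f (q N) - c) / δ)
  have h1 := hsum k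
  have h2 : c ≤ f (q (N + k)) := hcf _
  have h3 : f (q N) - c < k * δ := by
    rw [div_lt_iff₀ hδ0] at hk
    linarith
  linarith
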